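/- Pointwise lower bound for concave functions from the likelihood: let φ be concave on ℝ^d with max φ = M, let x0 be a point which is not an interior point of {φ ≥ φ(x0)} whenever φ(x0) < M, and let Q be a probability measure. If h(Q, x0) = sup{Q(C) : C ⊆ ℝ^d closed convex with x0 ∉ interior(C)} < 1, then ∫ φ dQ ≤ φ(x0)(1 - h(Q,x0)) + max(M,0). -/

import Mathlib

open MeasureTheory Filter Set

/-- Pointwise lower bound for concave functions from the likelihood: if `φ` is concave
with maximum `M`, `x0` is not interior to the superlevel set `{φ ≥ φ(x0)}` when
`φ(x0) < M`, and `h ≥ Q(C)` for every closed convex `C` with `x0 ∉ interior C`,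
with `0 ≤ h < 1`, then `∫ φ dQ ≤ φ(x0)(1-h) + max(M,0)`. -/
theorem stmt14 (d : ℕ) (φ : (Fin d → ℝ) → ℝ) (M : ℝ) (x0 : Fin d → ℝ)
    (Q : Measure (Fin d → ℝ)) [IsProbabilityMeasure Q]
    (hconc : ConcaveOn ℝ Set.univ φ)
    (hmax : ∀ x, φ x ≤ M) (hattain : ∃ x, φ x = M)
    (hx0 : φ x0 < M → x0 ∉ interior {x | φ x0 ≤ φ x})
    (h : ℝ) (hh0 : 0 ≤ h) (hh1 : h < 1)
    (hhQ : ∀ C : Set (Fin d → ℝ), IsClosed C → Convex ℝ C → x0 ∉ interior C →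
      (Q C).toReal ≤ h)
    (hint : Integrable φ Q) :
    ∫ x, φ x ∂Q ≤ φ x0 * (1 - h) + max M 0 := by
  have hcont : Continuous φ := by
    have := hconc.continuousOn isOpen_univ
    exact continuousOn_univ.mp this
  rcases eq_or_lt_of_le (hmax x0) with heq | hlt
  · -- φ x0 = M
    have h1 : ∫ x, φ x ∂Q ≤ M := by
      calc ∫ x, φ x ∂Q ≤ ∫ _, M ∂Q := integral_mono hint (integrable_const M) hmax
        _ = M := by simp
    have : M ≤ φ x0 * (1 - h) + max M 0 := by
      rcases le_or_gt 0 M with hM | hM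
      · rw [max_eq_left hM, ← heq]; nlinarith
      · rw [max_eq_right hM.le, ← heq]; nlinarith
    linarith
  · -- φ x0 < M
    set S : Set (Fin d → ℝ) := {x | φ x0 ≤ φ x} with hS
    have hScl : IsClosed S := isClosed_le continuous_const hcont
    have hSconv : Convex ℝ S := by
      have := hconc.convex_ge (φ x0)
      simpa [S, Set.sep_univ] using this
    have hSm : MeasurableSet S := hScl.measurableSet
    have hQS : (Q S).toReal ≤ h := hhQ S hScl hSconv (hx0 hlt)
    have hQS0 : 0 ≤ (Q S).toReal := ENNReal.toReal_nonneg
    have hcompl : (Q Sᶜ).toReal = 1 - (Q S).toReal := by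
      rw [measure_compl hSm (measure_ne_top Q S), measure_univ,
        ENNReal.toReal_sub_of_le prob_le_one (by simp)]
      simp
    have hsplit : ∫ x, φ x ∂Q = (∫ x in S, φ x ∂Q) + ∫ x in Sᶜ, φ x ∂Q :=
      (integral_add_compl hSm hint).symm
    have hIS : ∫ x in S, φ x ∂Q ≤ M * (Q S).toReal := by
      calc ∫ x in S, φ x ∂Q ≤ ∫ _ in S, M ∂Q :=
            setIntegral_mono_on hint.integrableOn (integrable_const M).integrableOn hSm
              (fun x _ => hmax x)
        _ = M * (Q S).toReal := by simp [mul_comm, Measure.real]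
    have hISc : ∫ x in Sᶜ, φ x ∂Q ≤ φ x0 * (Q Sᶜ).toReal := by
      calc ∫ x in Sᶜ, φ x ∂Q ≤ ∫ _ in Sᶜ, φ x0 ∂Q :=
            setIntegral_mono_on hint.integrableOn (integrable_const _).integrableOn
              hSm.compl (fun x hx => le_of_lt (by simpa [S] using hx))
        _ = φ x0 * (Q Sᶜ).toReal := by simp [mul_comm, Measure.real]
    have hMh : M * h ≤ max M 0 := by
      rcases le_or_gt 0 M with hM | hM
      · calc M * h ≤ M * 1 := by nlinarith
          _ ≤ max M 0 := by simp [hM]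
      · calc M * h ≤ 0 := by nlinarith
          _ ≤ max M 0 := le_max_right _ _
    have key : M * (Q S).toReal + φ x0 * (Q Sᶜ).toReal ≤ φ x0 * (1 - h) + max M 0 := by
      rw [hcompl]
      nlinarith [hlt, hQS]
    linarith
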